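/- arXiv:2605.14183 — 5 statements merged into one kernel-verified Lean document; each statement's English description precedes it below -/
import Mathlib

section
/- Let α ∈ ℤ, k ∈ ℝ³ with third component β = k₃, and n ∈ ℂ³. For ψ ∈ ℝ let R_ψ denote the rotation about the axis e₃ = (0,0,1) by angle ψ, i.e. the matrix with rows (cos ψ, −sin ψ, 0), (sin ψ, cos ψ, 0), (0,0,1), acting ℂ-linearly on ℂ³. Define the twisted X-ray field E₀ : ℝ³ → ℂ³ by E₀(x) = (1/2π) ∫_{−π}^{π} e^{iαψ} (R_ψ n) e^{i (R_ψ k)·x} dψ. Then E₀ is an eigenfunction of the helical group action: for every θ ∈ ℝ, τ ∈ ℝ and x ∈ ℝ³, R_θ E₀(R_{−θ} x − τ e₃) = e^{−i(αθ + βτ)} E₀(x). -/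
open Real

/-- Rotation about the axis `e₃ = (0,0,1)` by angle `ψ`. -/
noncomputable def Rot (ψ : ℝ) : Matrix (Fin 3) (Fin 3) ℝ :=
  !![Real.cos ψ, -Real.sin ψ, 0;
     Real.sin ψ,  Real.cos ψ, 0;
     0, 0, 1]

/-- The same rotation acting ℂ-linearly on ℂ³. -/
noncomputable def RotC (ψ : ℝ) : Matrix (Fin 3) (Fin 3) ℂ :=
  (Rot ψ).map (fun t => (t : ℂ))


lemma Rot_mul (a b : ℝ) : Rot a * Rot b = Rot (a + b) := by
  ext i j
  fin_cases i <;> fin_cases j <;>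
    simp [Rot, Matrix.mul_apply, Fin.sum_univ_three, Real.cos_add, Real.sin_add] <;> ring

lemma RotC_mul (a b : ℝ) : RotC a * RotC b = RotC (a + b) := by
  ext i j
  fin_cases i <;> fin_cases j <;>
    simp [RotC, Rot, Matrix.mul_apply, Fin.sum_univ_three, Real.cos_add, Real.sin_add] <;> push_cast <;> ring_nf

lemma dot_shift (ψ θ τ : ℝ) (k x : Fin 3 → ℝ) :
    ∑ i : Fin 3, (Rot ψ).mulVec k i * ((Rot (-θ)).mulVec x - τ • ![(0:ℝ),0,1]) i
      = (∑ i : Fin 3, (Rot (ψ+θ)).mulVec k i * x i) - τ * k 2 := by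
  simp [Rot, Matrix.mulVec, dotProduct, Fin.sum_univ_three, Real.cos_add, Real.sin_add,
    Real.cos_neg, Real.sin_neg]
  ring

noncomputable def G (α : ℤ) (k : Fin 3 → ℝ) (n : Fin 3 → ℂ) (x : Fin 3 → ℝ) (ψ : ℝ) : Fin 3 → ℂ :=
  (Complex.exp (Complex.I * (α : ℂ) * (ψ : ℂ)) *
    Complex.exp (Complex.I * ((∑ i : Fin 3, (Rot ψ).mulVec k i * x i : ℝ) : ℂ))) •
    (RotC ψ).mulVec n

lemma G_cont (α : ℤ) (k : Fin 3 → ℝ) (n : Fin 3 → ℂ) (x : Fin 3 → ℝ) :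
    Continuous (G α k n x) := by
  apply Continuous.fun_smul
  · apply Continuous.mul
    · fun_prop
    · apply Complex.continuous_exp.comp
      apply Continuous.mul continuous_const
      apply Complex.continuous_ofReal.comp
      simp [Rot, Matrix.mulVec, dotProduct, Fin.sum_univ_three]
      fun_prop
  · apply continuous_pi
    intro i
    simp [RotC, Rot, Matrix.mulVec, dotProduct, Fin.sum_univ_three]
    fin_cases i <;> simp <;> fun_prop

lemma G_periodic (α : ℤ) (k : Fin 3 → ℝ) (n : Fin 3 → ℂ) (x : Fin 3 → ℝ) :
    Function.Periodic (G α k n x) (2 * π) := by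
  intro ψ
  have hRot : Rot (ψ + 2 * π) = Rot ψ := by
    simp [Rot, Real.cos_add_two_pi, Real.sin_add_two_pi]
  have hexp : Complex.exp (Complex.I * (α : ℂ) * ((ψ + 2*π : ℝ) : ℂ))
      = Complex.exp (Complex.I * (α : ℂ) * (ψ : ℂ)) := by
    push_cast
    rw [mul_add, Complex.exp_add]
    have : Complex.I * (α:ℂ) * (2 * (π:ℂ)) = (α:ℤ) * (2 * (π:ℂ) * Complex.I) := by ring
    rw [this, Complex.exp_int_mul_two_pi_mul_I, mul_one]
  simp only [G, RotC, hRot, hexp]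

lemma key (α : ℤ) (k : Fin 3 → ℝ) (n : Fin 3 → ℂ) (θ τ : ℝ) (x : Fin 3 → ℝ) (ψ : ℝ) :
    (RotC θ).mulVec (G α k n ((Rot (-θ)).mulVec x - τ • ![0, 0, 1]) ψ)
      = Complex.exp (-(Complex.I * ((α : ℂ) * (θ : ℂ) + (k 2 : ℂ) * (τ : ℂ)))) •
        G α k n x (ψ + θ) := by
  unfold G
  rw [Matrix.mulVec_smul, Matrix.mulVec_mulVec, RotC_mul, dot_shift, smul_smul]
  have h1 : θ + ψ = ψ + θ := add_comm θ ψ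
  rw [h1]
  congr 1
  rw [← Complex.exp_add, ← Complex.exp_add, ← Complex.exp_add]
  congr 1
  push_cast
  ring

/-- The twisted X-ray field
`E₀(x) = (1/2π) ∫_{−π}^{π} e^{iαψ} (R_ψ n) e^{i(R_ψ k)·x} dψ` is an eigenfunction of the
helical group action: `R_θ E₀(R_{−θ}x − τe₃) = e^{−i(αθ+βτ)} E₀(x)` with `β = k₃`. -/
theorem twisted_xray_helical_eigenfunction
    (α : ℤ) (k : Fin 3 → ℝ) (n : Fin 3 → ℂ)
    (E₀ : (Fin 3 → ℝ) → Fin 3 → ℂ)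
    (hE₀ : ∀ x, E₀ x = ((2 * π)⁻¹ : ℝ) •
      ∫ ψ in (-π)..π,
        (Complex.exp (Complex.I * (α : ℂ) * (ψ : ℂ)) *
         Complex.exp (Complex.I * ((∑ i : Fin 3, (Rot ψ).mulVec k i * x i : ℝ) : ℂ))) •
        (RotC ψ).mulVec n) :
    ∀ (θ τ : ℝ) (x : Fin 3 → ℝ),
      (RotC θ).mulVec (E₀ ((Rot (-θ)).mulVec x - τ • ![0, 0, 1]))
        = Complex.exp (-(Complex.I * ((α : ℂ) * (θ : ℂ) + (k 2 : ℂ) * (τ : ℂ)))) • E₀ x := by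
  have hE : ∀ z, E₀ z = ((2 * π)⁻¹ : ℝ) • ∫ ψ in (-π)..π, G α k n z ψ := hE₀
  intro θ τ x
  set c : ℂ := Complex.exp (-(Complex.I * ((α : ℂ) * (θ : ℂ) + (k 2 : ℂ) * (τ : ℂ)))) with hc
  set y : Fin 3 → ℝ := (Rot (-θ)).mulVec x - τ • ![0, 0, 1] with hy
  rw [hE y, hE x]
  have hsmulR : ∀ (r : ℝ) (v : Fin 3 → ℂ), r • v = ((r : ℂ)) • v := by
    intro r v; ext i; simp [Complex.real_smul]
  let L : (Fin 3 → ℂ) →L[ℂ] (Fin 3 → ℂ) :=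
    LinearMap.toContinuousLinearMap (Matrix.mulVecLin (RotC θ))
  have hL : ∀ v, L v = (RotC θ).mulVec v := fun v => rfl
  have hInt : IntervalIntegrable (G α k n y) MeasureTheory.volume (-π) π :=
    (G_cont α k n y).intervalIntegrable _ _
  calc (RotC θ).mulVec (((2 * π)⁻¹ : ℝ) • ∫ ψ in (-π)..π, G α k n y ψ)
      = (((2 * π)⁻¹ : ℝ) : ℂ) • L (∫ ψ in (-π)..π, G α k n y ψ) := by
        rw [hsmulR, hL, Matrix.mulVec_smul]
    _ = (((2 * π)⁻¹ : ℝ) : ℂ) • ∫ ψ in (-π)..π, (RotC θ).mulVec (G α k n y ψ) := by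
        rw [← L.intervalIntegral_comp_comm hInt]
        rfl
    _ = (((2 * π)⁻¹ : ℝ) : ℂ) • ∫ ψ in (-π)..π, c • G α k n x (ψ + θ) := by
        congr 1
        apply intervalIntegral.integral_congr
        intro ψ _
        exact key α k n θ τ x ψ
    _ = (((2 * π)⁻¹ : ℝ) : ℂ) • c • ∫ ψ in (-π)..π, G α k n x (ψ + θ) := by
        rw [intervalIntegral.integral_smul]
    _ = (((2 * π)⁻¹ : ℝ) : ℂ) • c • ∫ ψ in (-π + θ)..(π + θ), G α k n x ψ := by
        rw [intervalIntegral.integral_comp_add_right]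
    _ = (((2 * π)⁻¹ : ℝ) : ℂ) • c • ∫ ψ in (-π)..π, G α k n x ψ := by
        congr 1
        have h := (G_periodic α k n x).intervalIntegral_add_eq (-π + θ) (-π)
        have e1 : -π + θ + 2 * π = π + θ := by ring
        have e2 : -π + 2 * π = π := by ring
        rw [e1, e2] at h
        rw [h]
    _ = c • ((2 * π)⁻¹ : ℝ) • ∫ ψ in (-π)..π, G α k n x ψ := by
        rw [hsmulR]
        rw [smul_comm]
end

section
/- Let n ≥ 1, let v₁,…,vₙ be nonzero vectors in ℂ², and let α ∈ ℂⁿ be an optimal coefficient vector with v_opt = Σⱼ αⱼ vⱼ. Then for every j = 1,…,n, the Hermitian inner product ⟨v_opt, vⱼ⟩ is nonzero. -/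
/-- Hermitian inner product on ℂ²: `⟨u,w⟩ = Σᵢ uᵢ conj(wᵢ)`. -/
noncomputable def herm (u w : Fin 2 → ℂ) : ℂ :=
  ∑ i : Fin 2, u i * (starRingEnd ℂ) (w i)

/-- Hermitian norm on ℂ²: `|u| = √⟨u,u⟩`. -/
noncomputable def cnorm2 (u : Fin 2 → ℂ) : ℝ :=
  Real.sqrt (∑ i : Fin 2, Complex.normSq (u i))

/-- A coefficient vector is admissible if every entry has modulus at most 1. -/
def Admissible {n : ℕ} (α : Fin n → ℂ) : Prop :=
  ∀ j, ‖α j‖ ≤ 1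

/-- A coefficient vector is optimal if it is admissible and maximizes the norm of the
resultant `Σⱼ αⱼ vⱼ` among all admissible coefficient vectors. -/
def IsOptimal {n : ℕ} (v : Fin n → Fin 2 → ℂ) (α : Fin n → ℂ) : Prop :=
  Admissible α ∧ ∀ β : Fin n → ℂ, Admissible β →
    cnorm2 (∑ j, β j • v j) ≤ cnorm2 (∑ j, α j • v j)

/-- For an optimal coefficient vector `α` with resultant
`v_opt = Σⱼ αⱼ vⱼ`, the inner product `⟨v_opt, vⱼ⟩` is nonzero for every `j`. -/
theorem optimal_inner_products_nonzero
    (n : ℕ) (hn : 1 ≤ n) (v : Fin n → Fin 2 → ℂ) (hv : ∀ j, v j ≠ 0)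
    (α : Fin n → ℂ) (hα : IsOptimal v α) :
    ∀ j, herm (∑ i, α i • v i) (v j) ≠ 0 := by
  intro j h
  set V : Fin 2 → ℂ := ∑ i, α i • v i with hV
  set t : ℂ := if α j = 0 then 1 else -α j with ht
  have ht0 : t ≠ 0 := by
    by_cases h0 : α j = 0 <;> simp [ht, h0]
  set β : Fin n → ℂ := Function.update α j (α j + t) with hβ
  have hβadm : Admissible β := by
    intro i
    by_cases hi : i = j
    · subst hi
      by_cases h0 : α i = 0 <;> simp [hβ, ht, h0]
    · simpa [hβ, Function.update_of_ne hi] using hα.1 i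
  have hsum : (∑ i, β i • v i) = V + t • v j := by
    have : ∀ i, β i • v i = α i • v i + (if i = j then t • v j else 0) := by
      intro i
      by_cases hi : i = j
      · subst hi; simp [hβ, Function.update_self, add_smul]
      · simp [hβ, Function.update_of_ne hi, hi]
    rw [Fintype.sum_congr _ _ this, Finset.sum_add_distrib, Finset.sum_ite_eq' Finset.univ j]
    simp [hV]
  -- expand norms
  have key : (∑ i : Fin 2, Complex.normSq ((V + t • v j) i))
      = (∑ i : Fin 2, Complex.normSq (V i))
        + Complex.normSq t * (∑ i : Fin 2, Complex.normSq (v j i)) := by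
    have expand : ∀ i : Fin 2, Complex.normSq ((V + t • v j) i)
        = Complex.normSq (V i) + Complex.normSq t * Complex.normSq (v j i)
          + 2 * ((starRingEnd ℂ t) * (V i * (starRingEnd ℂ) (v j i))).re := by
      intro i
      have : (V + t • v j) i = V i + t * v j i := by simp
      have hre : (V i * (starRingEnd ℂ) (t * v j i)).re
          = ((starRingEnd ℂ t) * (V i * (starRingEnd ℂ) (v j i))).re := by
        rw [map_mul]
        ring_nf
      rw [this, Complex.normSq_add, Complex.normSq_mul, hre]
    rw [Fintype.sum_congr _ _ expand]
    rw [Finset.sum_add_distrib, Finset.sum_add_distrib, ← Finset.mul_sum]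
    have cross : (∑ i : Fin 2, 2 * ((starRingEnd ℂ t) * (V i * (starRingEnd ℂ) (v j i))).re) = 0 := by
      rw [← Finset.mul_sum, ← Complex.re_sum, ← Finset.mul_sum]
      have : (∑ i : Fin 2, V i * (starRingEnd ℂ) (v j i)) = herm V (v j) := rfl
      rw [this, h, mul_zero]
      simp
    rw [cross, add_zero]
  have hvj : (0:ℝ) < ∑ i : Fin 2, Complex.normSq (v j i) := by
    rcases Function.ne_iff.mp (hv j) with ⟨i, hi⟩
    have : 0 < Complex.normSq (v j i) := Complex.normSq_pos.mpr hi
    have hle : Complex.normSq (v j i) ≤ ∑ i : Fin 2, Complex.normSq (v j i) :=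
      Finset.single_le_sum (fun i _ => Complex.normSq_nonneg _) (Finset.mem_univ i)
    linarith
  have hlt : cnorm2 V < cnorm2 (V + t • v j) := by
    unfold cnorm2
    apply Real.sqrt_lt_sqrt
    · exact Finset.sum_nonneg fun i _ => Complex.normSq_nonneg _
    · rw [key]
      have : 0 < Complex.normSq t * (∑ i : Fin 2, Complex.normSq (v j i)) :=
        mul_pos (Complex.normSq_pos.mpr ht0) hvj
      linarith
  have := hα.2 β hβadm
  rw [hsum] at this
  exact absurd this (not_le.mpr hlt)
end

section
/- Let n ≥ 1, let v₁,…,vₙ be nonzero vectors in ℂ², and let α ∈ ℂⁿ be an optimal coefficient vector with v_opt = Σⱼ αⱼ vⱼ. Then for every j = 1,…,n, the real part of the Hermitian inner product of v_opt with the j-th contribution is strictly positive: Re⟨v_opt, αⱼ vⱼ⟩ > 0. -/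
lemma herm_self_re (u : Fin 2 → ℂ) : (herm u u).re = ∑ i : Fin 2, Complex.normSq (u i) := by
  simp [herm, Complex.mul_conj, Fin.sum_univ_two]

lemma cnorm2_le_iff (u w : Fin 2 → ℂ) :
    cnorm2 u ≤ cnorm2 w ↔ (herm u u).re ≤ (herm w w).re := by
  rw [herm_self_re, herm_self_re, cnorm2, cnorm2]
  exact Real.sqrt_le_sqrt_iff (Finset.sum_nonneg fun i _ => Complex.normSq_nonneg _)

lemma herm_expand (A b : Fin 2 → ℂ) (c : ℂ) :
    (herm (c • b + A) (c • b + A)).re =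
      (herm A A).re + 2 * ((starRingEnd ℂ) c * herm A b).re +
        Complex.normSq c * (herm b b).re := by
  simp [herm, Fin.sum_univ_two, Complex.normSq_apply, Complex.mul_re, Complex.mul_im,
    Complex.add_re, Complex.add_im, Complex.conj_re, Complex.conj_im]
  ring

lemma herm_smul_right_re (S b : Fin 2 → ℂ) (c : ℂ) (A : Fin 2 → ℂ) (hS : S = c • b + A) :
    (herm S (c • b)).re = Complex.normSq c * (herm b b).re + ((starRingEnd ℂ) c * herm A b).re := by
  subst hS
  simp [herm, Fin.sum_univ_two, Complex.normSq_apply, Complex.mul_re, Complex.mul_im,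
    Complex.add_re, Complex.add_im, Complex.conj_re, Complex.conj_im]
  ring


/-- For an optimal coefficient vector `α` with resultant
`v_opt = Σⱼ αⱼ vⱼ`, one has `Re⟨v_opt, αⱼ vⱼ⟩ > 0` for every `j`. -/
theorem optimal_contributions_positive
    (n : ℕ) (hn : 1 ≤ n) (v : Fin n → Fin 2 → ℂ) (hv : ∀ j, v j ≠ 0)
    (α : Fin n → ℂ) (hα : IsOptimal v α) :
    ∀ j, 0 < (herm (∑ i, α i • v i) (α j • v j)).re := by
  classical
  obtain ⟨hadm, hopt⟩ := hα
  intro j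
  set b := v j with hb
  set A : Fin 2 → ℂ := ∑ i ∈ Finset.univ.erase j, α i • v i with hA
  have hS : (∑ i, α i • v i) = α j • b + A := by
    rw [hA, hb]; exact (Finset.add_sum_erase _ _ (Finset.mem_univ j)).symm
  set h := herm A b with hh
  set βj : ℂ := if h = 0 then 1 else h / (‖h‖ : ℂ) with hβj
  have habsne : h ≠ 0 → (‖h‖ : ℂ) ≠ 0 := fun h0 => by
    simpa using h0
  have hβjabs : ‖βj‖ = 1 := by
    rw [hβj]
    split
    · simp
    · next h0 =>
      rw [norm_div, Complex.norm_real, norm_norm,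
        div_self (norm_ne_zero_iff.mpr h0)]
  have hβjconj : (starRingEnd ℂ) βj * h = (‖h‖ : ℂ) := by
    rw [hβj]
    split
    · next h0 => simp [h0]
    · next h0 =>
      rw [map_div₀, Complex.conj_ofReal, div_mul_eq_mul_div, Complex.conj_mul']
      rw [sq, mul_div_assoc, div_self (habsne h0), mul_one]
  set β : Fin n → ℂ := Function.update α j βj with hβ
  have hβadm : Admissible β := by
    intro i
    by_cases hij : i = j
    · subst hij; simp [hβ, hβjabs]
    · simp [hβ, Function.update_of_ne hij]; exact hadm i
  have hSβ : (∑ i, β i • v i) = βj • b + A := by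
    rw [hA, hb, ← Finset.add_sum_erase _ _ (Finset.mem_univ j)]
    congr 1
    · simp [hβ]
    · exact Finset.sum_congr rfl fun i hi => by
        rw [hβ, Function.update_of_ne (Finset.ne_of_mem_erase hi)]
  have hK := (cnorm2_le_iff _ _).mp (hopt β hβadm)
  rw [hSβ, hS, herm_expand, herm_expand, hβjconj] at hK
  have hnsβ : Complex.normSq βj = 1 := by
    rw [← Complex.sq_norm, hβjabs]; norm_num
  rw [hnsβ, Complex.ofReal_re] at hK
  have hNb : 0 < (herm b b).re := by
    rw [herm_self_re]
    obtain ⟨i, hi⟩ := Function.ne_iff.mp (hv j)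
    exact Finset.sum_pos' (fun i _ => Complex.normSq_nonneg _)
      ⟨i, Finset.mem_univ i, Complex.normSq_pos.mpr hi⟩
  rw [herm_smul_right_re _ _ _ _ hS]
  nlinarith [norm_nonneg h, Complex.normSq_nonneg (α j), hNb, hK]
end

section
/- Let n ≥ 1, let v₁,…,vₙ be nonzero vectors in ℂ², and let α ∈ ℂⁿ be an optimal coefficient vector. Then every optimal coefficient lies on the unit circle: |αⱼ| = 1 for every j = 1,…,n. -/
lemma cnorm2_eq_norm (u : Fin 2 → ℂ) :
    cnorm2 u = ‖(WithLp.equiv 2 (Fin 2 → ℂ)).symm u‖ := by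
  rw [EuclideanSpace.norm_eq, cnorm2]
  congr 1
  refine Finset.sum_congr rfl fun i _ => ?_
  rw [← Complex.sq_norm]
  rfl

/-- Every optimal coefficient lies on the unit circle: `|αⱼ| = 1`. -/
theorem optimal_coefficients_unit_modulus
    (n : ℕ) (hn : 1 ≤ n) (v : Fin n → Fin 2 → ℂ) (hv : ∀ j, v j ≠ 0)
    (α : Fin n → ℂ) (hα : IsOptimal v α) :
    ∀ j, ‖α j‖ = 1 := by
  intro j
  by_contra hj
  have hlt : ‖α j‖ < 1 := lt_of_le_of_ne (hα.1 j) hj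
  set t : ℝ := 1 - ‖α j‖ with ht
  have htpos : 0 < t := by simp [ht]; linarith
  -- work in EuclideanSpace
  let E := EuclideanSpace ℂ (Fin 2)
  let e : (Fin 2 → ℂ) → E := (WithLp.equiv 2 (Fin 2 → ℂ)).symm
  let S : E := e (∑ k, α k • v k)
  let w : E := e (v j)
  have hw : w ≠ 0 := by
    intro h
    exact hv j (by simpa [w, e] using congrArg (WithLp.equiv 2 (Fin 2 → ℂ)) h)
  set z : ℂ := @inner ℂ E _ S w with hz
  set c : ℂ := if z = 0 then 1 else (starRingEnd ℂ) z / ((‖z‖ : ℝ) : ℂ) with hc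
  have hcabs : ‖c‖ = 1 := by
    rcases eq_or_ne z 0 with h | h
    · simp [hc, h]
    · simp [hc, h, norm_div, Complex.norm_conj, Complex.norm_real,
        abs_of_nonneg (norm_nonneg z)]
  have hcz : c * z = ((‖z‖ : ℝ) : ℂ) := by
    rcases eq_or_ne z 0 with h | h
    · simp [hc, h]
    · rw [hc, if_neg h]
      rw [div_mul_eq_mul_div, mul_comm, Complex.mul_conj, Complex.normSq_eq_norm_sq]
      have hne : ((‖z‖ : ℝ) : ℂ) ≠ 0 := by
        simpa using norm_ne_zero_iff.mpr h
      field_simp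
      push_cast
      ring
  -- the perturbed coefficients
  set β : Fin n → ℂ := Function.update α j (α j + t * c) with hβ
  have hβadm : Admissible β := by
    intro k
    rcases eq_or_ne k j with rfl | hk
    · simp only [hβ, Function.update_self]
      calc ‖α k + ↑t * c‖ ≤ ‖α k‖ + ‖↑t * c‖ :=
            norm_add_le _ _
        _ = ‖α k‖ + t := by
            rw [norm_mul, hcabs, Complex.norm_real, Real.norm_eq_abs, abs_of_pos htpos, mul_one]
        _ = 1 := by rw [ht]; ring
    · simp [hβ, Function.update_of_ne hk, hα.1 k]
  have hsum : (∑ k, β k • v k) = (∑ k, α k • v k) + (t * c) • v j := by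
    have : ∀ k : Fin n, β k • v k = α k • v k + (if k = j then ((t : ℂ) * c) • v j else 0) := by
      intro k
      rcases eq_or_ne k j with rfl | hk
      · simp [hβ, add_smul]
      · simp [hβ, Function.update_of_ne hk, hk]
    rw [Finset.sum_congr rfl fun k _ => this k, Finset.sum_add_distrib,
      Finset.sum_ite_eq' Finset.univ j (fun _ => ((t : ℂ) * c) • v j)]
    simp
  -- norm computation in E
  have hkey : ‖S‖ < ‖S + ((t : ℂ) * c) • w‖ := by
    have hsq : ‖S + ((t : ℂ) * c) • w‖ ^ 2
        = ‖S‖ ^ 2 + 2 * RCLike.re (@inner ℂ E _ S (((t : ℂ) * c) • w)) + ‖((t : ℂ) * c) • w‖ ^ 2 :=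
      norm_add_sq S _
    have hre : RCLike.re (@inner ℂ E _ S (((t : ℂ) * c) • w)) = t * ‖z‖ := by
      rw [inner_smul_right, ← hz, mul_assoc, hcz, ← Complex.ofReal_mul]
      simp
    have hwn : 0 < ‖((t : ℂ) * c) • w‖ := by
      rw [norm_smul]
      apply mul_pos
      · rw [norm_mul]
        apply mul_pos
        · simpa [Complex.norm_real, abs_of_pos htpos] using htpos
        · simp [hcabs]
      · exact norm_pos_iff.mpr hw
    have h2 : ‖S‖ ^ 2 < ‖S + ((t : ℂ) * c) • w‖ ^ 2 := by
      rw [hsq, hre]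
      have h3 : 0 ≤ t * ‖z‖ := by positivity
      nlinarith [sq_nonneg ‖((t : ℂ) * c) • w‖, hwn, norm_nonneg z, htpos]
    exact lt_of_pow_lt_pow_left₀ 2 (norm_nonneg _) h2
  -- contradiction with optimality
  have hle := hα.2 β hβadm
  rw [cnorm2_eq_norm, cnorm2_eq_norm] at hle
  have hEq : (WithLp.equiv 2 (Fin 2 → ℂ)).symm (∑ k, β k • v k) = S + ((t : ℂ) * c) • w := by
    show e (∑ k, β k • v k) = _
    rw [hsum]; rfl
  rw [hEq] at hle
  exact absurd hle (not_le.mpr hkey)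
end

section
/- Let n ≥ 1, let v₁,…,vₙ be nonzero vectors in ℂ², and let α ∈ ℂⁿ be an optimal coefficient vector with v_opt = Σⱼ αⱼ vⱼ. Then each optimal coefficient is the normalized inner product with the optimal resultant: for every j = 1,…,n, ⟨v_opt, vⱼ⟩ ≠ 0 and αⱼ = ⟨v_opt, vⱼ⟩ / |⟨v_opt, vⱼ⟩|; consequently the optimal resultant satisfies the fixed-point equation v_opt = Σⱼ (⟨v_opt, vⱼ⟩ / |⟨v_opt, vⱼ⟩|) vⱼ. -/
private lemma eq_ofReal_of_re_eq_abs {z : ℂ} (h : z.re = ‖z‖) :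
    z = ((‖z‖ : ℝ) : ℂ) := by
  have h3 := Complex.sq_norm z
  rw [Complex.normSq_apply, ← h] at h3
  have h2 : z.im = 0 := by nlinarith [h3]
  apply Complex.ext
  · simpa using h
  · simp [h2]

private lemma herm_add_left (u w x : Fin 2 → ℂ) : herm (u + w) x = herm u x + herm w x := by
  simp [herm, add_mul, Finset.sum_add_distrib]

private lemma herm_smul_left (c : ℂ) (u x : Fin 2 → ℂ) : herm (c • u) x = c * herm u x := by
  simp [herm, Fin.sum_univ_two]; ring

private lemma herm_self (u : Fin 2 → ℂ) :
    herm u u = ((∑ i, Complex.normSq (u i) : ℝ) : ℂ) := by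
  simp [herm, Complex.mul_conj]

/-- For an optimal coefficient vector `α` with resultant
`v_opt = Σⱼ αⱼ vⱼ`, each coefficient equals the normalized inner product
`αⱼ = ⟨v_opt, vⱼ⟩ / |⟨v_opt, vⱼ⟩|`, and `v_opt` satisfies the fixed-point equation
`v_opt = Σⱼ (⟨v_opt, vⱼ⟩ / |⟨v_opt, vⱼ⟩|) vⱼ`. -/
theorem optimal_coefficients_fixed_point
    (n : ℕ) (hn : 1 ≤ n) (v : Fin n → Fin 2 → ℂ) (hv : ∀ j, v j ≠ 0)
    (α : Fin n → ℂ) (hα : IsOptimal v α) :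
    (∀ j, herm (∑ i, α i • v i) (v j) ≠ 0 ∧
      α j = herm (∑ i, α i • v i) (v j) /
        ((‖herm (∑ i, α i • v i) (v j)‖ : ℝ) : ℂ)) ∧
    (∑ i, α i • v i) = ∑ j, (herm (∑ i, α i • v i) (v j) /
        ((‖herm (∑ i, α i • v i) (v j)‖ : ℝ) : ℂ)) • v j := by
  obtain ⟨hadm, hmax⟩ := hα
  have key : ∀ j, herm (∑ i, α i • v i) (v j) ≠ 0 ∧
      α j = herm (∑ i, α i • v i) (v j) /
        ((‖herm (∑ i, α i • v i) (v j)‖ : ℝ) : ℂ) := by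
    intro j
    set V : Fin 2 → ℂ := ∑ i, α i • v i with hV
    set W : Fin 2 → ℂ := V - α j • v j with hWdef
    have hVW : V = W + α j • v j := by rw [hWdef]; abel
    set h := herm W (v j) with hhdef
    set A : ℝ := ∑ i, Complex.normSq (W i) with hA
    set B : ℝ := ∑ i, Complex.normSq (v j i) with hB
    have hBpos : 0 < B := by
      obtain ⟨i, hi⟩ := Function.ne_iff.mp (hv j)
      exact Finset.sum_pos' (fun i _ => Complex.normSq_nonneg _)
        ⟨i, Finset.mem_univ i, Complex.normSq_pos.mpr hi⟩
    have hsum : ∀ β : ℂ, (∑ i, Function.update α j β i • v i) = W + β • v j := by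
      intro β
      have h1 : ∀ i : Fin n, Function.update α j β i • v i
          = Function.update (fun i => α i • v i) j (β • v j) i := by
        intro i
        rcases eq_or_ne i j with rfl | hij
        · simp
        · simp [Function.update_of_ne hij]
      rw [Finset.sum_congr rfl fun i _ => h1 i,
        Finset.sum_update_of_mem (Finset.mem_univ j), hWdef, hV,
        Finset.sum_eq_sum_sdiff_singleton_add (Finset.mem_univ j) (fun i => α i • v i)]
      abel
    have expand : ∀ β : ℂ, (∑ i, Complex.normSq ((W + β • v j) i))
        = A + Complex.normSq β * B + 2 * ((starRingEnd ℂ) β * h).re := by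
      intro β
      have h1 : ∀ i : Fin 2, Complex.normSq ((W + β • v j) i)
          = Complex.normSq (W i) + Complex.normSq β * Complex.normSq (v j i)
            + 2 * ((starRingEnd ℂ) β * (W i * (starRingEnd ℂ) (v j i))).re := by
        intro i
        simp only [Pi.add_apply, Pi.smul_apply, smul_eq_mul]
        rw [Complex.normSq_add, Complex.normSq_mul]
        have h2 : W i * (starRingEnd ℂ) (β * v j i)
            = (starRingEnd ℂ) β * (W i * (starRingEnd ℂ) (v j i)) := by
          rw [map_mul]; ring
        rw [h2]
      rw [hA, hB, hhdef, herm]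
      rw [Finset.sum_congr rfl fun i _ => h1 i, Finset.sum_add_distrib,
        Finset.sum_add_distrib, ← Finset.mul_sum, ← Finset.mul_sum,
        ← Complex.re_sum, ← Finset.mul_sum]
    have hineq : ∀ β : ℂ, ‖β‖ ≤ 1 →
        A + Complex.normSq β * B + 2 * ((starRingEnd ℂ) β * h).re
          ≤ A + Complex.normSq (α j) * B + 2 * ((starRingEnd ℂ) (α j) * h).re := by
      intro β hβ
      have hadm' : Admissible (Function.update α j β) := by
        intro i
        rcases eq_or_ne i j with rfl | hij
        · simpa using hβ
        · simpa [Function.update_of_ne hij] using hadm i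
      have hle := hmax _ hadm'
      rw [hsum β] at hle
      rw [hVW] at hle
      simp only [cnorm2] at hle
      have hfin : (∑ i, Complex.normSq ((W + β • v j) i))
          ≤ ∑ i, Complex.normSq ((W + α j • v j) i) := by
        by_contra hcon
        push_neg at hcon
        have := Real.sqrt_lt_sqrt
          (Finset.sum_nonneg fun i _ => Complex.normSq_nonneg _) hcon
        linarith
      rw [expand β, expand (α j)] at hfin
      exact hfin
    set t := ‖α j‖ with ht
    have ht1 : t ≤ 1 := hadm j
    have ht0 : 0 ≤ t := norm_nonneg _
    have habsh : 0 ≤ ‖h‖ := norm_nonneg h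
    have hβ0 : ∃ β0 : ℂ, ‖β0‖ = 1 ∧
        (starRingEnd ℂ) β0 * h = ((‖h‖ : ℝ) : ℂ) := by
      rcases eq_or_ne h 0 with h0 | h0
      · exact ⟨1, by simp, by simp [h0]⟩
      · refine ⟨h / ((‖h‖ : ℝ) : ℂ), ?_, ?_⟩
        · rw [norm_div, Complex.norm_real, Real.norm_eq_abs, abs_of_nonneg habsh,
            div_self (norm_ne_zero_iff.mpr h0)]
        · rw [map_div₀, Complex.conj_ofReal, div_mul_eq_mul_div, mul_comm,
            Complex.mul_conj, Complex.normSq_eq_norm_sq]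
          have hne : ((‖h‖ : ℝ) : ℂ) ≠ 0 :=
            Complex.ofReal_ne_zero.mpr (norm_ne_zero_iff.mpr h0)
          push_cast
          field_simp
    obtain ⟨β0, hb0abs, hb0h⟩ := hβ0
    have key1 := hineq β0 (le_of_eq hb0abs)
    rw [hb0h] at key1
    have hb0sq : Complex.normSq β0 = 1 := by
      rw [Complex.normSq_eq_norm_sq, hb0abs]; norm_num
    rw [hb0sq] at key1
    simp only [Complex.ofReal_re] at key1
    have hnsα : Complex.normSq (α j) = t ^ 2 := (Complex.sq_norm (α j)).symm
    rw [hnsα] at key1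
    have hr_le : ((starRingEnd ℂ) (α j) * h).re ≤ t * ‖h‖ := by
      calc ((starRingEnd ℂ) (α j) * h).re ≤ ‖(starRingEnd ℂ) (α j) * h‖ :=
            Complex.re_le_norm _
        _ = t * ‖h‖ := by rw [norm_mul, Complex.norm_conj]
    have hchain : B + 2 * ‖h‖ ≤ t ^ 2 * B + 2 * (t * ‖h‖) := by
      linarith [key1, hr_le]
    have ht_ge : 1 ≤ t := by
      nlinarith [hchain, hBpos, habsh, ht0, ht1, mul_nonneg ht0 hBpos.le]
    have ht_eq : t = 1 := le_antisymm ht1 ht_ge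
    rw [ht_eq] at key1 hr_le
    have hre : ((starRingEnd ℂ) (α j) * h).re = ‖h‖ :=
      le_antisymm (by linarith [hr_le]) (by linarith [key1])
    have habs_z : ‖(starRingEnd ℂ) (α j) * h‖ = ‖h‖ := by
      rw [norm_mul, Complex.norm_conj, ← ht, ht_eq, one_mul]
    have hz : (starRingEnd ℂ) (α j) * h = ((‖h‖ : ℝ) : ℂ) := by
      have h5 := eq_ofReal_of_re_eq_abs (z := (starRingEnd ℂ) (α j) * h)
        (by rw [habs_z, hre])
      rwa [habs_z] at h5
    have hBC : herm (v j) (v j) = ((B : ℝ) : ℂ) := by rw [herm_self, ← hB]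
    have hherm : herm V (v j) = h + α j * ((B : ℝ) : ℂ) := by
      rw [hVW, herm_add_left, herm_smul_left, hBC, ← hhdef]
    have hconj1 : (starRingEnd ℂ) (α j) * α j = 1 := by
      rw [mul_comm, Complex.mul_conj, hnsα, ht_eq]
      norm_num
    have hconjH : (starRingEnd ℂ) (α j) * herm V (v j)
        = ((‖h‖ + B : ℝ) : ℂ) := by
      rw [hherm, mul_add, hz, ← mul_assoc, hconj1, one_mul]
      push_cast
      ring
    have hcpos : (0:ℝ) < ‖h‖ + B := by linarith
    have hHne : herm V (v j) ≠ 0 := by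
      intro h0
      rw [h0, mul_zero] at hconjH
      have h6 : (‖h‖ + B : ℝ) = 0 := by exact_mod_cast hconjH.symm
      linarith
    have hH : herm V (v j) = α j * ((‖h‖ + B : ℝ) : ℂ) := by
      calc herm V (v j) = (α j * (starRingEnd ℂ) (α j)) * herm V (v j) := by
            rw [mul_comm (α j), hconj1, one_mul]
        _ = α j * ((starRingEnd ℂ) (α j) * herm V (v j)) := by ring
        _ = α j * ((‖h‖ + B : ℝ) : ℂ) := by rw [hconjH]
    have habsH : ‖herm V (v j)‖ = ‖h‖ + B := by
      rw [hH, norm_mul, Complex.norm_real, Real.norm_eq_abs, ← ht, ht_eq, one_mul, abs_of_pos hcpos]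
    refine ⟨hHne, ?_⟩
    rw [habsH, hH, mul_div_assoc,
      div_self (Complex.ofReal_ne_zero.mpr (ne_of_gt hcpos)), mul_one]
  refine ⟨key, ?_⟩
  exact Finset.sum_congr rfl fun j _ => by rw [(key j).2]
end
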